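/- Let V, W be n-graded vector spaces over a field 𝕂 of characteristic 0 and let E be the ℤ×ℤⁿ-graded vector space with E^{(0,*)} = V, E^{(1,*)} = W and E^{(k,*)} = 0 otherwise. Then the homogeneous components of M(E) decompose as: M^{(k,q,*)}(E) = 0 for q > 1; M^{(k,1,*)}(E) ≅ L^{(k+1,*)}(V,W), the space of (k+1)-linear maps V×…×V → W; and M^{(k,0,*)}(E) ≅ M^{(k,*)}(V) ⊕ ⊕^{k+1} L^{(k,*)}(V, End(W)), where L^{(k,*)}(V,End(W)) is the space of k-linear maps V×…×V → End(W). Moreover, under this decomposition a bilinear P ∈ M^{(1,0,…,0)}(E) corresponds exactly to the triple μ + λ + ρ, where μ(X₁,X₂) = P(X₁,X₂) ∈ V, λ(X)Y = P(X,Y) and ρ(X)Y = (−1)^{⟨x,y⟩}P(Y,X) for X,X_i ∈ V and Y ∈ W. -/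

import Mathlib

namespace NR

open Finset

/-- The sign `(-1)^z` for an integer `z`. -/
def sgn (z : ℤ) : ℤ := (-1) ^ z.natAbs

/-- The inner product `⟨x,y⟩ = ∑ i, xⁱ yⁱ` of multidegrees `x, y ∈ ℤⁿ`. -/
def pairZ (n : ℕ) (x y : Fin n → ℤ) : ℤ := ∑ i, x i * y i

/-- The inner product of `(n+1)`-degrees in `ℤ × ℤⁿ`. -/
def prE (n : ℕ) (g h : ℤ × (Fin n → ℤ)) : ℤ := g.1 * h.1 + pairZ n g.2 h.2

/-- Shift a sequence: `shiftSeq f i = (f i, f (i+1), …)`. -/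
def shiftSeq {β : Type*} (f : ℕ → β) (i : ℕ) : ℕ → β := fun m => f (m + i)

/-- Insert the value `c` at slot `i` of the sequence `f`, where `c` replaces
`a` consecutive entries of `f` (the entries `f i, …, f (i+a-1)`). -/
def insSeq {β : Type*} (a i : ℕ) (c : β) (f : ℕ → β) : ℕ → β :=
  fun l => if l < i then f l else if l = i then c else f (l + a - 1)

/-- Permute the first `a` entries of a sequence by `σ`. -/
def permSeq {β : Type*} (a : ℕ) (σ : Equiv.Perm (Fin a)) (f : ℕ → β) : ℕ → β :=
  fun l => if h : l < a then f ((σ ⟨l, h⟩ : Fin a) : ℕ) else f l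

/-- The multigraded sign `sign(σ, x)` of a permutation `σ` of `a` symbols with respect to
the multidegrees `x 0, …, x (a-1)`; it is the ordinary sign times the Koszul sign
collected over the inversions of `σ`. -/
def gsign {G : Type*} (pr : G → G → ℤ) (a : ℕ) (σ : Equiv.Perm (Fin a)) (x : ℕ → G) : ℤ :=
  ((Equiv.Perm.sign σ : ℤˣ) : ℤ) *
    (-1) ^ (∑ p ∈ Finset.univ.filter
        (fun p : Fin a × Fin a => p.1 < p.2 ∧ σ p.2 < σ p.1),
        pr (x ((σ p.1 : Fin a) : ℕ)) (x ((σ p.2 : Fin a) : ℕ))).natAbs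

section Ops

variable {G U : Type*} [AddCommGroup G] [AddCommGroup U]

/-- The operation `j(K₁)K₂` of the multigraded Nijenhuis–Richardson calculus.
`K₁` represents an element of `M^{(k₁,κ₁)}(U)` of arity `a₁ = k₁+1` and `K₂` one of
`M^{(k₂,κ₂)}(U)` of arity `a₂ = k₂+1`; an element of arity `a` is coded as a function
taking the sequence of multidegrees of the (homogeneous) arguments and the sequence of
arguments, and depending only on the first `a` of them. -/
def jop (pr : G → G → ℤ) (a₁ : ℕ) (κ₁ : G) (a₂ : ℕ) (κ₂ : G)
    (K₁ K₂ : (ℕ → G) → (ℕ → U) → U) : (ℕ → G) → (ℕ → U) → U :=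
  fun x X => ∑ i ∈ Finset.range a₂,
    sgn (((a₁ : ℤ) - 1) * (i : ℤ) + pr κ₁ (κ₂ + ∑ l ∈ Finset.range i, x l)) •
      K₂ (insSeq a₁ i ((∑ m ∈ Finset.range a₁, x (m + i)) + κ₁) x)
         (insSeq a₁ i (K₁ (shiftSeq x i) (shiftSeq X i)) X)

/-- The multigraded bracket `[K₁,K₂]^Δ = j(K₁)K₂ - (-1)^{k₁k₂+⟨κ₁,κ₂⟩} j(K₂)K₁`. -/
def brD (pr : G → G → ℤ) (a₁ : ℕ) (κ₁ : G) (a₂ : ℕ) (κ₂ : G)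
    (K₁ K₂ : (ℕ → G) → (ℕ → U) → U) : (ℕ → G) → (ℕ → U) → U :=
  fun x X => jop pr a₁ κ₁ a₂ κ₂ K₁ K₂ x X
    - sgn (((a₁ : ℤ) - 1) * ((a₂ : ℤ) - 1) + pr κ₁ κ₂) • jop pr a₂ κ₂ a₁ κ₁ K₂ K₁ x X

end Ops

/-- `K` represents a (`a`-linear) element of `M(U)`: it does not depend on the degree
sequence, depends only on the first `a` arguments, and is `𝕂`-multilinear in them. -/
def IsML (𝕂 : Type*) [Field 𝕂] {G U U' : Type*} [AddCommGroup U] [Module 𝕂 U]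
    [AddCommGroup U'] [Module 𝕂 U'] (a : ℕ) (K : (ℕ → G) → (ℕ → U) → U') : Prop :=
  (∀ x x' X, K x X = K x' X) ∧
  (∀ x X X', (∀ i, i < a → X i = X' i) → K x X = K x X') ∧
  (∀ x X i, i < a →
    (∀ u v : U, K x (Function.update X i (u + v))
        = K x (Function.update X i u) + K x (Function.update X i v)) ∧
    (∀ (r : 𝕂) (u : U), K x (Function.update X i (r • u)) = r • K x (Function.update X i u)))

/-- `K ∈ M^{(a-1,κ)}(U)`: an `a`-linear map mapping `U^{x₀} × ⋯ × U^{x_{a-1}}` into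
`U^{x₀+⋯+x_{a-1}+κ}`. -/
def MDeg (𝕂 : Type*) [Field 𝕂] {G U : Type*} [AddCommGroup G] [AddCommGroup U] [Module 𝕂 U]
    (gr : G → Submodule 𝕂 U) (a : ℕ) (κ : G) (K : (ℕ → G) → (ℕ → U) → U) : Prop :=
  IsML 𝕂 a K ∧
  ∀ x X, (∀ i, X i ∈ gr (x i)) → K x X ∈ gr ((∑ i ∈ Finset.range a, x i) + κ)

/-- The multigraded alternator `α` on elements of arity `a`. -/
def alt (𝕂 : Type*) [Field 𝕂] {G U U' : Type*} [AddCommGroup U'] [Module 𝕂 U']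
    (pr : G → G → ℤ) (a : ℕ) (K : (ℕ → G) → (ℕ → U) → U') : (ℕ → G) → (ℕ → U) → U' :=
  fun x X => (a.factorial : 𝕂)⁻¹ •
    ∑ σ : Equiv.Perm (Fin a),
      ((gsign pr a σ x : ℤ) : 𝕂) • K (permSeq a σ x) (permSeq a σ X)

/-- The operation `i(K₁)K₂ = ((k₁+k₂+1)!/((k₁+1)!(k₂+1)!)) α(j(K₁)K₂)`. -/
def iop (𝕂 : Type*) [Field 𝕂] {G U : Type*} [AddCommGroup G] [AddCommGroup U] [Module 𝕂 U]
    (pr : G → G → ℤ) (a₁ : ℕ) (κ₁ : G) (a₂ : ℕ) (κ₂ : G)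
    (K₁ K₂ : (ℕ → G) → (ℕ → U) → U) : (ℕ → G) → (ℕ → U) → U :=
  fun x X =>
    (((a₁ + a₂ - 1).factorial : 𝕂) / ((a₁.factorial : 𝕂) * (a₂.factorial : 𝕂))) •
      alt 𝕂 pr (a₁ + a₂ - 1) (jop pr a₁ κ₁ a₂ κ₂ K₁ K₂) x X

/-- The multigraded Nijenhuis–Richardson bracket
`[K₁,K₂]^∧ = i(K₁)K₂ - (-1)^{k₁k₂+⟨κ₁,κ₂⟩} i(K₂)K₁`. -/
def brW (𝕂 : Type*) [Field 𝕂] {G U : Type*} [AddCommGroup G] [AddCommGroup U] [Module 𝕂 U]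
    (pr : G → G → ℤ) (a₁ : ℕ) (κ₁ : G) (a₂ : ℕ) (κ₂ : G)
    (K₁ K₂ : (ℕ → G) → (ℕ → U) → U) : (ℕ → G) → (ℕ → U) → U :=
  fun x X => iop 𝕂 pr a₁ κ₁ a₂ κ₂ K₁ K₂ x X
    - sgn (((a₁ : ℤ) - 1) * ((a₂ : ℤ) - 1) + pr κ₁ κ₂) • iop 𝕂 pr a₂ κ₂ a₁ κ₁ K₂ K₁ x X

/-- `K ∈ A^{(a-1,κ)}(U) = α(M^{(a-1,κ)}(U))`, i.e. `K ∈ M^{(a-1,κ)}(U)` and `K` is fixed by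
the multigraded alternator (on homogeneous arguments). -/
def ADeg (𝕂 : Type*) [Field 𝕂] {G U : Type*} [AddCommGroup G] [AddCommGroup U] [Module 𝕂 U]
    (pr : G → G → ℤ) (gr : G → Submodule 𝕂 U) (a : ℕ) (κ : G)
    (K : (ℕ → G) → (ℕ → U) → U) : Prop :=
  MDeg 𝕂 gr a κ K ∧
  ∀ x X, (∀ i, X i ∈ gr (x i)) → alt 𝕂 pr a K x X = K x X

/-- The bilinear map `P` coded as an element of arity `2`. -/
def KofBil {𝕂 : Type*} [Field 𝕂] {G U : Type*} [AddCommGroup U] [Module 𝕂 U]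
    (P : U →ₗ[𝕂] U →ₗ[𝕂] U) : (ℕ → G) → (ℕ → U) → U :=
  fun _ X => P (X 0) (X 1)


section VW

variable {𝕂 : Type} [Field 𝕂] {V W : Type} [AddCommGroup V] [Module 𝕂 V]
  [AddCommGroup W] [Module 𝕂 W]

/-- The `(ℤ × ℤⁿ)`-grading of `E = V ⊕ W` with `E^{(0,x)} = V^x`, `E^{(1,x)} = W^x` and
`E^{(q,x)} = 0` otherwise. -/
def EgrP (𝕂 : Type) [Field 𝕂] (n : ℕ) {V W : Type} [AddCommGroup V] [Module 𝕂 V]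
    [AddCommGroup W] [Module 𝕂 W] (grV : (Fin n → ℤ) → Submodule 𝕂 V)
    (grW : (Fin n → ℤ) → Submodule 𝕂 W) : ℤ × (Fin n → ℤ) → Submodule 𝕂 (V × W) :=
  fun g =>
    if g.1 = 0 then (grV g.2).prod (⊥ : Submodule 𝕂 W)
    else if g.1 = 1 then (⊥ : Submodule 𝕂 V).prod (grW g.2)
    else ⊥

/-- `μ(X₁,X₂) = P(X₁,X₂)` (the `V`-part of `P` on `V × V`). -/
def bmu (P : (V × W) →ₗ[𝕂] (V × W) →ₗ[𝕂] (V × W)) (X₁ X₂ : V) : V :=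
  (P (X₁, 0) (X₂, 0)).1

/-- `λ(X)Y = P(X,Y)` for `X ∈ V`, `Y ∈ W`. -/
def blam (P : (V × W) →ₗ[𝕂] (V × W) →ₗ[𝕂] (V × W)) (X : V) (Y : W) : W :=
  (P (X, 0) ((0 : V), Y)).2

/-- `π(X)Y = P(X,Y)` for `X ∈ V`, `Y ∈ W` (the representation in the Lie case). -/
def bpi (P : (V × W) →ₗ[𝕂] (V × W) →ₗ[𝕂] (V × W)) (X : V) (Y : W) : W :=
  (P (X, 0) ((0 : V), Y)).2

/-- `ρ(X)Y = (−1)^{⟨x,y⟩} P(Y,X)` for homogeneous `X ∈ V^x`, `Y ∈ W^y`. -/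
def brho (n : ℕ) (P : (V × W) →ₗ[𝕂] (V × W) →ₗ[𝕂] (V × W))
    (x y : Fin n → ℤ) (X : V) (Y : W) : W :=
  sgn (pairZ n x y) • (P ((0 : V), Y) (X, (0 : W))).2

/-- A `k`-linear map `C ∈ L^{(k,c)}(V,W)` of weight `c` (coded as in `IsML`,
with values in `W`). -/
def LDeg (𝕂 : Type) [Field 𝕂] (n : ℕ) {V W : Type} [AddCommGroup V] [Module 𝕂 V]
    [AddCommGroup W] [Module 𝕂 W]
    (grV : (Fin n → ℤ) → Submodule 𝕂 V) (grW : (Fin n → ℤ) → Submodule 𝕂 W)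
    (a : ℕ) (c : Fin n → ℤ) (C : (ℕ → (Fin n → ℤ)) → (ℕ → V) → W) : Prop :=
  IsML 𝕂 a C ∧
  ∀ x X, (∀ i, X i ∈ grV (x i)) → C x X ∈ grW ((∑ i ∈ Finset.range a, x i) + c)

/-- A `k`-linear map `V × ⋯ × V → End(W)` of total weight `c`
(an element of `L^{(k,*)}(V, End(W))`). -/
def LEDeg (𝕂 : Type) [Field 𝕂] (n : ℕ) {V W : Type} [AddCommGroup V] [Module 𝕂 V]
    [AddCommGroup W] [Module 𝕂 W]
    (grV : (Fin n → ℤ) → Submodule 𝕂 V) (grW : (Fin n → ℤ) → Submodule 𝕂 W)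
    (a : ℕ) (c : Fin n → ℤ) (C : (ℕ → (Fin n → ℤ)) → (ℕ → V) → W → W) : Prop :=
  (∀ x x' X, C x X = C x' X) ∧
  (∀ x X X', (∀ i, i < a → X i = X' i) → C x X = C x X') ∧
  (∀ x X i, i < a →
    (∀ u v : V, C x (Function.update X i (u + v))
        = C x (Function.update X i u) + C x (Function.update X i v)) ∧
    (∀ (r : 𝕂) (u : V), C x (Function.update X i (r • u)) = r • C x (Function.update X i u))) ∧
  (∀ x X, IsLinearMap 𝕂 (C x X)) ∧
  (∀ x X, (∀ i, X i ∈ grV (x i)) → ∀ (y : Fin n → ℤ) (Y : W), Y ∈ grW y →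
    C x X Y ∈ grW ((∑ i ∈ Finset.range a, x i) + c + y))

/-- The element of `M^{(k-1,(1,c))}(E)` corresponding to `C ∈ L^{(k,c)}(V,W)`. -/
def KCof (n : ℕ) {V W : Type} [AddCommGroup V] [AddCommGroup W]
    (C : (ℕ → (Fin n → ℤ)) → (ℕ → V) → W) :
    (ℕ → ℤ × (Fin n → ℤ)) → (ℕ → V × W) → V × W :=
  fun x X => ((0 : V), C (fun i => (x i).2) (fun i => (X i).1))

/-- The element of `M^{(1,(-1,0))}(E)` corresponding to a multiplication `ν : W × W → W`. -/
def KNu {𝕂 : Type} [Field 𝕂] (n : ℕ) {V W : Type} [AddCommGroup V] [AddCommGroup W]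
    [Module 𝕂 W] (ν : W →ₗ[𝕂] W →ₗ[𝕂] W) :
    (ℕ → ℤ × (Fin n → ℤ)) → (ℕ → V × W) → V × W :=
  fun _ X => ((0 : V), ν (X 0).2 (X 1).2)

/-- Merge slots `i` and `i+1` of a sequence into the single value `c` at slot `i`. -/
def mergeAt {β : Type*} (i : ℕ) (c : β) (f : ℕ → β) : ℕ → β :=
  fun l => if l < i then f l else if l = i then c else f (l + 1)

/-- Delete slot `i` of a sequence. -/
def delAt {β : Type*} (i : ℕ) (f : ℕ → β) : ℕ → β :=
  fun l => if l < i then f l else f (l + 1)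

/-- Prepend the value `c` to a sequence. -/
def consAt {β : Type*} (c : β) (f : ℕ → β) : ℕ → β :=
  fun l => if l = 0 then c else f (l - 1)

/-- Insert the value `c` at slot `p` of a sequence (shifting the later entries). -/
def ins1 {β : Type*} (p : ℕ) (c : β) (f : ℕ → β) : ℕ → β :=
  fun l => if l < p then f l else if l = p then c else f (l - 1)

end VW


/-! ### Auxiliary lemmas -/

section Seq
variable {β : Type*}

lemma comp_update {α : Type*} (h : α → β) (X : ℕ → α) (i : ℕ) (v : α) :
    (fun j => h (Function.update X i v j)) = Function.update (fun j => h (X j)) i (h v) := by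
  funext j
  rw [Function.update_apply, Function.update_apply]
  split <;> rfl

lemma ins1_update (p i : ℕ) (c v : β) (f : ℕ → β) :
    ins1 p c (Function.update f i v)
      = Function.update (ins1 p c f) (if i < p then i else i + 1) v := by
  funext l
  simp only [ins1, Function.update_apply]
  split_ifs <;> first | rfl | omega

lemma delAt_update (p i : ℕ) (hip : i ≠ p) (v : β) (f : ℕ → β) :
    delAt p (Function.update f i v)
      = Function.update (delAt p f) (if i < p then i else i - 1) v := by
  funext l
  simp only [delAt, Function.update_apply]
  split_ifs <;> first | rfl | omega

lemma delAt_update_self (p : ℕ) (v : β) (f : ℕ → β) :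
    delAt p (Function.update f p v) = delAt p f := by
  funext l
  simp only [delAt, Function.update_apply]
  split_ifs <;> first | rfl | omega

lemma delAt_ins1 (p : ℕ) (c : β) (f : ℕ → β) : delAt p (ins1 p c f) = f := by
  funext l
  simp only [delAt, ins1]
  split_ifs <;> first | rfl | omega | (congr 1; omega)

lemma ins1_delAt (p : ℕ) (f : ℕ → β) : ins1 p (f p) (delAt p f) = f := by
  funext l
  simp only [delAt, ins1]
  split_ifs <;> first | rfl | omega | (congr 1; omega)

lemma update_ins1 (p : ℕ) (c c' : β) (f : ℕ → β) :
    Function.update (ins1 p c f) p c' = ins1 p c' f := by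
  funext l
  simp only [ins1, Function.update_apply]
  split_ifs <;> first | rfl | omega

lemma sum_ins1 [AddCommMonoid β] (k p : ℕ) (hp : p ≤ k) (c : β) (f : ℕ → β) :
    ∑ l ∈ Finset.range (k + 1), ins1 p c f l = c + ∑ l ∈ Finset.range k, f l := by
  induction k with
  | zero =>
    interval_cases p
    simp [ins1]
  | succ k ih =>
    rcases Nat.lt_or_ge p (k + 1) with h | h
    · rw [Finset.sum_range_succ, ih (by omega), Finset.sum_range_succ]
      have : ins1 p c f (k + 1) = f k := by
        simp only [ins1]
        rw [if_neg (by omega), if_neg (by omega)]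
        congr 1
      rw [this, add_assoc]
    · have hp' : p = k + 1 := by omega
      subst hp'
      rw [Finset.sum_range_succ]
      have h1 : ins1 (k+1) c f (k+1) = c := by simp [ins1]
      have h2 : ∀ l ∈ Finset.range (k+1), ins1 (k+1) c f l = f l := by
        intro l hl
        simp only [Finset.mem_range] at hl
        simp only [ins1, if_pos hl]
      rw [Finset.sum_congr rfl h2, h1, add_comm]

lemma sum_delAt [AddCommMonoid β] (k p : ℕ) (hp : p ≤ k) (f : ℕ → β) :
    f p + ∑ l ∈ Finset.range k, delAt p f l = ∑ l ∈ Finset.range (k + 1), f l := by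
  have := sum_ins1 k p hp (f p) (delAt p f)
  rw [ins1_delAt] at this
  rw [← this]

end Seq

section AuxML
variable {𝕂 : Type} [Field 𝕂]

lemma zero_slot' {U U' : Type*} [AddCommGroup U] [Module 𝕂 U] [AddCommGroup U']
    [Module 𝕂 U'] (K : (ℕ → U) → U') (X : ℕ → U) (i : ℕ)
    (hs : ∀ (r : 𝕂) (u : U), K (Function.update X i (r • u)) = r • K (Function.update X i u))
    (h0 : X i = 0) : K X = 0 := by
  have h := hs 0 0
  rw [zero_smul, zero_smul] at h
  have he : Function.update X i (0 : U) = X := by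
    conv_lhs => rw [← h0]
    exact Function.update_eq_self i X
  rwa [he] at h

lemma isml_zero_slot {G U U' : Type*} [AddCommGroup U] [Module 𝕂 U] [AddCommGroup U']
    [Module 𝕂 U'] {a : ℕ} {K : (ℕ → G) → (ℕ → U) → U'} (hK : IsML 𝕂 a K)
    (x : ℕ → G) (X : ℕ → U) {i : ℕ} (hi : i < a) (h0 : X i = 0) : K x X = 0 :=
  zero_slot' (K x) X i (fun r u => (hK.2.2 x X i hi).2 r u) h0

lemma linear_vanish {ι : Sort*} {M N : Type*} [AddCommGroup M] [Module 𝕂 M]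
    [AddCommGroup N] [Module 𝕂 N] (gr : ι → Submodule 𝕂 M) (htop : iSup gr = ⊤)
    {f : M → N} (h0 : f 0 = 0) (hadd : ∀ u v, f (u + v) = f u + f v)
    (h : ∀ i, ∀ v ∈ gr i, f v = 0) : ∀ v, f v = 0 := by
  intro v
  have hv : v ∈ ⨆ i, gr i := htop ▸ Submodule.mem_top
  exact Submodule.iSup_induction gr (motive := fun w => f w = 0) hv h h0
    (fun u w hu hw => by show f (u + w) = 0; rw [hadd, hu, hw, add_zero])

lemma ml_agree {G' V' U' : Type*} [AddCommGroup V'] [Module 𝕂 V'] [AddCommGroup U']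
    [Module 𝕂 U'] (grV : G' → Submodule 𝕂 V') (htop : iSup grV = ⊤) (a : ℕ)
    (C C' : (ℕ → G') → (ℕ → V') → U') (hC : IsML 𝕂 a C) (hC' : IsML 𝕂 a C')
    (hagree : ∀ x X, (∀ i, X i ∈ grV (x i)) → C x X = C' x X) :
    ∀ x X, C x X = C' x X := by
  suffices h : ∀ j x X, (∀ i, j ≤ i → i < a → ∃ g, X i ∈ grV g) → C x X = C' x X by
    intro x X
    exact h a x X (fun i hji hia => absurd (lt_of_le_of_lt hji hia) (lt_irrefl a))
  intro j
  induction j with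
  | zero =>
    intro x X hX
    set x' : ℕ → G' := fun i => if h : i < a then (hX i (Nat.zero_le _) h).choose else x i
      with hx'
    set X' : ℕ → V' := fun i => if i < a then X i else 0 with hX'
    have hmem : ∀ i, X' i ∈ grV (x' i) := by
      intro i
      by_cases hi : i < a
      · simp only [hX', hx', if_pos hi, dif_pos hi]
        exact (hX i (Nat.zero_le _) hi).choose_spec
      · simp only [hX', if_neg hi]
        exact Submodule.zero_mem _
    have h1 : C x X = C x X' := hC.2.1 x X X' (fun i hi => by simp [hX', if_pos hi])
    have h2 : C' x X = C' x X' := hC'.2.1 x X X' (fun i hi => by simp [hX', if_pos hi])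
    rw [h1, h2, hC.1 x x' X', hC'.1 x x' X']
    exact hagree x' X' hmem
  | succ j ih =>
    intro x X hX
    by_cases hj : j < a
    · have hv : X j ∈ ⨆ g, grV g := htop ▸ Submodule.mem_top
      have key : C x (Function.update X j (X j)) = C' x (Function.update X j (X j)) := by
        refine Submodule.iSup_induction grV hv
          (motive := fun v => C x (Function.update X j v) = C' x (Function.update X j v))
          ?_ ?_ ?_
        · intro g v hvg
          refine ih x (Function.update X j v) ?_
          intro i hji hia
          rcases eq_or_lt_of_le hji with rfl | hlt
          · exact ⟨g, by rwa [Function.update_self]⟩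
          · rw [Function.update_of_ne (by omega)]
            exact hX i (by omega) hia
        · show C x (Function.update X j 0) = C' x (Function.update X j 0)
          rw [isml_zero_slot hC x _ hj (Function.update_self j 0 X),
            isml_zero_slot hC' x _ hj (Function.update_self j 0 X)]
        · intro u w hu hw
          show C x (Function.update X j (u + w)) = C' x (Function.update X j (u + w))
          rw [(hC.2.2 x X j hj).1 u w, (hC'.2.2 x X j hj).1 u w, hu, hw]
      rwa [Function.update_eq_self] at key
    · exact ih x X (fun i hji hia => hX i (by omega) hia)

end AuxML

section AuxE
variable {𝕂 : Type} [Field 𝕂] {n : ℕ} {V W : Type} [AddCommGroup V] [Module 𝕂 V]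
  [AddCommGroup W] [Module 𝕂 W] {grV : (Fin n → ℤ) → Submodule 𝕂 V}
  {grW : (Fin n → ℤ) → Submodule 𝕂 W}

lemma EgrP_zero (x : Fin n → ℤ) :
    EgrP 𝕂 n grV grW ((0 : ℤ), x) = (grV x).prod (⊥ : Submodule 𝕂 W) := by
  simp [EgrP]

lemma EgrP_one (x : Fin n → ℤ) :
    EgrP 𝕂 n grV grW ((1 : ℤ), x) = (⊥ : Submodule 𝕂 V).prod (grW x) := by
  simp [EgrP]

lemma EgrP_other {q : ℤ} (h0 : q ≠ 0) (h1 : q ≠ 1) (x : Fin n → ℤ) :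
    EgrP 𝕂 n grV grW (q, x) = ⊥ := by
  simp [EgrP, h0, h1]

lemma EgrP_fst_mem {g : ℤ × (Fin n → ℤ)} {u : V × W}
    (h : u ∈ EgrP 𝕂 n grV grW g) : u.1 ∈ grV g.2 := by
  simp only [EgrP] at h
  split_ifs at h with h0 h1
  · exact h.1
  · have : u.1 = 0 := h.1
    rw [this]; exact Submodule.zero_mem _
  · rw [Submodule.mem_bot] at h
    rw [h]; exact Submodule.zero_mem _

lemma EgrP_snd_mem {g : ℤ × (Fin n → ℤ)} {u : V × W}
    (h : u ∈ EgrP 𝕂 n grV grW g) : u.2 ∈ grW g.2 := by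
  simp only [EgrP] at h
  split_ifs at h with h0 h1
  · have : u.2 = 0 := h.2
    rw [this]; exact Submodule.zero_mem _
  · exact h.2
  · rw [Submodule.mem_bot] at h
    rw [h]; exact Submodule.zero_mem _

lemma EgrP_fst_eq_zero {g : ℤ × (Fin n → ℤ)} {u : V × W}
    (h : u ∈ EgrP 𝕂 n grV grW g) (h0 : g.1 ≠ 0) : u.1 = 0 := by
  simp only [EgrP, if_neg h0] at h
  split_ifs at h with h1
  · exact h.1
  · rw [Submodule.mem_bot] at h
    rw [h]; rfl

lemma EgrP_snd_eq_zero {g : ℤ × (Fin n → ℤ)} {u : V × W}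
    (h : u ∈ EgrP 𝕂 n grV grW g) (h1 : g.1 ≠ 1) : u.2 = 0 := by
  simp only [EgrP, if_neg h1] at h
  split_ifs at h with h0
  · exact h.2
  · rw [Submodule.mem_bot] at h
    rw [h]; rfl

lemma EgrP_eq_zero {g : ℤ × (Fin n → ℤ)} {u : V × W}
    (h : u ∈ EgrP 𝕂 n grV grW g) (h0 : g.1 ≠ 0) (h1 : g.1 ≠ 1) : u = 0 := by
  simp only [EgrP, if_neg h0, if_neg h1, Submodule.mem_bot] at h
  exact h

lemma mem_EgrP_V {x : Fin n → ℤ} {v : V} (hv : v ∈ grV x) :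
    ((v, (0 : W)) : V × W) ∈ EgrP 𝕂 n grV grW ((0 : ℤ), x) := by
  rw [EgrP_zero]
  exact ⟨hv, Submodule.zero_mem _⟩

lemma mem_EgrP_W {y : Fin n → ℤ} {w : W} (hw : w ∈ grW y) :
    (((0 : V), w) : V × W) ∈ EgrP 𝕂 n grV grW ((1 : ℤ), y) := by
  rw [EgrP_one]
  exact ⟨Submodule.zero_mem _, hw⟩

end AuxE


section Parts
variable {𝕂 : Type} [Field 𝕂] {n : ℕ} {V W : Type}
  [AddCommGroup V] [Module 𝕂 V] [AddCommGroup W] [Module 𝕂 W]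
  {grV : (Fin n → ℤ) → Submodule 𝕂 V} {grW : (Fin n → ℤ) → Submodule 𝕂 W}

lemma degV_sum (k : ℕ) (c : Fin n → ℤ) (x : ℕ → (Fin n → ℤ)) (q : ℤ) :
    (∑ i ∈ Finset.range (k + 1), ((0 : ℤ), x i)) + ((q : ℤ), c)
      = ((q : ℤ), (∑ i ∈ Finset.range (k + 1), x i) + c) := by
  apply Prod.ext
  · simp [Prod.fst_add, Prod.fst_sum]
  · simp [Prod.snd_add, Prod.snd_sum]

lemma part1 (k : ℕ) (c : Fin n → ℤ) (q : ℤ) (hq : 1 < q)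
    (K : (ℕ → ℤ × (Fin n → ℤ)) → (ℕ → V × W) → V × W)
    (hK : MDeg 𝕂 (EgrP 𝕂 n grV grW) (k + 1) (q, c) K)
    (x : ℕ → ℤ × (Fin n → ℤ)) (X : ℕ → V × W)
    (hX : ∀ i, X i ∈ EgrP 𝕂 n grV grW (x i)) : K x X = 0 := by
  by_cases hneg : ∃ i ∈ Finset.range (k + 1), (x i).1 < 0
  · obtain ⟨i, hi, hlt⟩ := hneg
    rw [Finset.mem_range] at hi
    exact isml_zero_slot hK.1 x X hi (EgrP_eq_zero (hX i) (by omega) (by omega))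
  · push_neg at hneg
    have hsum : (0 : ℤ) ≤ ∑ i ∈ Finset.range (k + 1), (x i).1 :=
      Finset.sum_nonneg (fun i hi => hneg i hi)
    have hmem := hK.2 x X hX
    have hfst : ((∑ i ∈ Finset.range (k + 1), x i) + (q, c)).1
        = (∑ i ∈ Finset.range (k + 1), (x i).1) + q := by
      simp [Prod.fst_add, Prod.fst_sum]
    exact EgrP_eq_zero hmem (by omega) (by omega)

lemma part2a (htopV : iSup grV = ⊤) (k : ℕ) (c : Fin n → ℤ)
    (K : (ℕ → ℤ × (Fin n → ℤ)) → (ℕ → V × W) → V × W)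
    (hK : MDeg 𝕂 (EgrP 𝕂 n grV grW) (k + 1) ((1 : ℤ), c) K) :
    ∃! C : (ℕ → (Fin n → ℤ)) → (ℕ → V) → W,
      LDeg 𝕂 n grV grW (k + 1) c C ∧
      ∀ (x : ℕ → (Fin n → ℤ)) (X : ℕ → V), (∀ i, X i ∈ grV (x i)) →
        K (fun i => ((0 : ℤ), x i)) (fun i => (X i, (0 : W))) = ((0 : V), C x X) := by
  set C : (ℕ → (Fin n → ℤ)) → (ℕ → V) → W :=
    fun x X => (K (fun i => ((0 : ℤ), x i)) (fun i => (X i, (0 : W)))).2 with hCdef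
  have hisml : IsML 𝕂 (k + 1) C := by
    refine ⟨?_, ?_, ?_⟩
    · intro x x' X
      simp only [hCdef]
      rw [hK.1.1 (fun i => ((0 : ℤ), x i)) (fun i => ((0 : ℤ), x' i))]
    · intro x X X' h
      simp only [hCdef]
      rw [hK.1.2.1 _ (fun i => (X i, 0)) (fun i => (X' i, 0)) (fun i hi => congrArg (fun v => ((v : V), (0 : W))) (h i hi))]
    · intro x X i hi
      constructor
      · intro u v
        simp only [hCdef]
        rw [comp_update (fun v : V => (v, (0 : W))) X i (u + v),
            comp_update (fun v : V => (v, (0 : W))) X i u,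
            comp_update (fun v : V => (v, (0 : W))) X i v]
        have he : ((u + v : V), (0 : W)) = (u, (0 : W)) + (v, 0) := by
          simp [Prod.mk_add_mk]
        rw [he, (hK.1.2.2 _ (fun j => (X j, 0)) i hi).1 (u, 0) (v, 0)]
        rfl
      · intro r u
        simp only [hCdef]
        rw [comp_update (fun v : V => (v, (0 : W))) X i (r • u),
            comp_update (fun v : V => (v, (0 : W))) X i u]
        have he : ((r • u : V), (0 : W)) = r • ((u : V), (0 : W)) := by
          simp [Prod.smul_mk]
        rw [he, (hK.1.2.2 _ (fun j => (X j, 0)) i hi).2 r (u, 0)]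
        rfl
  have hgrad : ∀ (x : ℕ → (Fin n → ℤ)) (X : ℕ → V), (∀ i, X i ∈ grV (x i)) →
      K (fun i => ((0 : ℤ), x i)) (fun i => (X i, (0 : W)))
        ∈ EgrP 𝕂 n grV grW ((1 : ℤ), (∑ i ∈ Finset.range (k + 1), x i) + c) := by
    intro x X hX
    have h := hK.2 (fun i => ((0 : ℤ), x i)) (fun i => (X i, 0))
      (fun i => mem_EgrP_V (hX i))
    rwa [degV_sum k c x 1] at h
  have hcompat : ∀ (x : ℕ → (Fin n → ℤ)) (X : ℕ → V), (∀ i, X i ∈ grV (x i)) →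
      K (fun i => ((0 : ℤ), x i)) (fun i => (X i, (0 : W))) = ((0 : V), C x X) := by
    intro x X hX
    exact Prod.ext (EgrP_fst_eq_zero (hgrad x X hX) (by norm_num)) rfl
  refine ⟨C, ⟨⟨hisml, ?_⟩, hcompat⟩, ?_⟩
  · intro x X hX
    exact EgrP_snd_mem (hgrad x X hX)
  · intro C' ⟨hC'L, hC'compat⟩
    have hagree : ∀ x X, (∀ i, X i ∈ grV (x i)) → C' x X = C x X := by
      intro x X hX
      have h1 := hC'compat x X hX
      have h2 := hcompat x X hX
      rw [h1] at h2
      exact (Prod.mk.injEq _ _ _ _ ▸ h2).2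
    have := ml_agree grV htopV (k + 1) C' C hC'L.1 hisml hagree
    funext x X
    exact this x X

lemma part2b (k : ℕ) (c : Fin n → ℤ)
    (C : (ℕ → (Fin n → ℤ)) → (ℕ → V) → W) (hC : LDeg 𝕂 n grV grW (k + 1) c C) :
    ∃ K : (ℕ → ℤ × (Fin n → ℤ)) → (ℕ → V × W) → V × W,
      MDeg 𝕂 (EgrP 𝕂 n grV grW) (k + 1) ((1 : ℤ), c) K ∧
      ∀ (x : ℕ → (Fin n → ℤ)) (X : ℕ → V), (∀ i, X i ∈ grV (x i)) →
        K (fun i => ((0 : ℤ), x i)) (fun i => (X i, (0 : W))) = ((0 : V), C x X) := by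
  refine ⟨KCof n C, ⟨⟨?_, ?_, ?_⟩, ?_⟩, ?_⟩
  · intro x x' X
    simp only [KCof]
    rw [hC.1.1 (fun i => (x i).2) (fun i => (x' i).2)]
  · intro x X X' h
    simp only [KCof]
    rw [hC.1.2.1 _ (fun i => (X i).1) (fun i => (X' i).1) (fun i hi => congrArg Prod.fst (h i hi))]
  · intro x X i hi
    constructor
    · intro u v
      simp only [KCof]
      rw [comp_update Prod.fst X i (u + v), comp_update Prod.fst X i u,
          comp_update Prod.fst X i v]
      rw [show (u + v).1 = u.1 + v.1 from rfl,
          (hC.1.2.2 _ (fun j => (X j).1) i hi).1 u.1 v.1]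
      simp [Prod.mk_add_mk]
    · intro r u
      simp only [KCof]
      rw [comp_update Prod.fst X i (r • u), comp_update Prod.fst X i u]
      rw [show (r • u).1 = r • u.1 from rfl,
          (hC.1.2.2 _ (fun j => (X j).1) i hi).2 r u.1]
      simp [Prod.smul_mk]
  · intro x X hX
    have hfst : ∀ i, (X i).1 ∈ grV ((x i).2) := fun i => EgrP_fst_mem (hX i)
    have hdeg : (∑ i ∈ Finset.range (k + 1), x i) + ((1 : ℤ), c)
        = ((∑ i ∈ Finset.range (k + 1), (x i).1) + 1,
           (∑ i ∈ Finset.range (k + 1), (x i).2) + c) := by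
      apply Prod.ext
      · simp [Prod.fst_add, Prod.fst_sum]
      · simp [Prod.snd_add, Prod.snd_sum]
    rw [hdeg]
    by_cases hs : ∑ i ∈ Finset.range (k + 1), (x i).1 = 0
    · rw [hs, zero_add, EgrP_one]
      refine Submodule.mem_prod.mpr ⟨(Submodule.mem_bot _).mpr rfl, ?_⟩
      exact hC.2 (fun i => (x i).2) (fun i => (X i).1) hfst
    · obtain ⟨i, hi, hne⟩ := Finset.exists_ne_zero_of_sum_ne_zero hs
      rw [Finset.mem_range] at hi
      have hzero : (fun j => (X j).1) i = 0 := EgrP_fst_eq_zero (hX i) hne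
      have hCz : C (fun i => (x i).2) (fun j => (X j).1) = 0 :=
        isml_zero_slot hC.1 _ _ hi hzero
      show ((0 : V), C (fun i => (x i).2) (fun j => (X j).1)) ∈ _
      rw [hCz]
      exact Submodule.zero_mem _
  · intro x X hX
    rfl

end Parts

section Part4
variable {𝕂 : Type} [Field 𝕂] {n : ℕ} {V W : Type}
  [AddCommGroup V] [Module 𝕂 V] [AddCommGroup W] [Module 𝕂 W]
  {grV : (Fin n → ℤ) → Submodule 𝕂 V} {grW : (Fin n → ℤ) → Submodule 𝕂 W}

lemma sgn_smul_sgn_smul (z : ℤ) (w : W) : sgn z • sgn z • w = w := by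
  rw [smul_smul]
  have : sgn z * sgn z = 1 := by
    rw [sgn, ← pow_add]
    exact Even.neg_one_pow ⟨z.natAbs, rfl⟩
  rw [this, one_smul]

lemma part4 (htopV : iSup grV = ⊤) (htopW : iSup grW = ⊤)
    (P : (V × W) →ₗ[𝕂] (V × W) →ₗ[𝕂] (V × W))
    (hP : ∀ (g h : ℤ × (Fin n → ℤ)) (u v : V × W),
        u ∈ EgrP 𝕂 n grV grW g → v ∈ EgrP 𝕂 n grV grW h →
        P u v ∈ EgrP 𝕂 n grV grW (g + h)) :
    (∀ X₁ X₂ : V, P (X₁, 0) (X₂, 0) = (bmu P X₁ X₂, (0 : W))) ∧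
    (∀ (X : V) (Y : W), P (X, 0) ((0 : V), Y) = ((0 : V), blam P X Y)) ∧
    (∀ (x y : Fin n → ℤ) (X : V) (Y : W), X ∈ grV x → Y ∈ grW y →
      P ((0 : V), Y) (X, (0 : W))
        = ((0 : V), sgn (pairZ n x y) • brho n P x y X Y)) := by
  refine ⟨?_, ?_, ?_⟩
  · -- second component of P on V×V vanishes
    have hmu : ∀ X₁ : V, ∀ X₂ : V, (P (X₁, 0) (X₂, 0)).2 = 0 := by
      intro X₁
      -- first reduce to homogeneous X₁ by linearity
      have step1 : ∀ (x₁ : Fin n → ℤ) (X₁ : V), X₁ ∈ grV x₁ →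
          ∀ X₂ : V, (P (X₁, 0) (X₂, 0)).2 = 0 := by
        intro x₁ X₁ hX₁
        refine linear_vanish grV htopV ?_ ?_ ?_
        · show (P (X₁, 0) ((0 : V), (0 : W))).2 = 0
          rw [show ((0 : V), (0 : W)) = (0 : V × W) from rfl, map_zero]
          rfl
        · intro u v
          rw [show ((u + v : V), (0 : W)) = (u, (0 : W)) + (v, 0) from by
            rw [Prod.mk_add_mk, add_zero], map_add]
          rfl
        · intro x₂ X₂ hX₂
          have h := hP ((0 : ℤ), x₁) ((0 : ℤ), x₂) _ _ (mem_EgrP_V hX₁) (mem_EgrP_V hX₂)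
          exact EgrP_snd_eq_zero h (by norm_num [Prod.fst_add])
      intro X₂
      refine linear_vanish grV htopV (f := fun X₁ => (P (X₁, 0) (X₂, 0)).2) ?_ ?_ ?_ X₁
      · show (P ((0 : V), (0 : W)) (X₂, 0)).2 = 0
        rw [show ((0 : V), (0 : W)) = (0 : V × W) from rfl, map_zero]
        rfl
      · intro u v
        show (P ((u + v : V), (0 : W)) (X₂, 0)).2 = _
        rw [show ((u + v : V), (0 : W)) = (u, (0 : W)) + (v, 0) from by
          rw [Prod.mk_add_mk, add_zero], map_add]
        rfl
      · intro x₁ X₁' hX₁'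
        exact step1 x₁ X₁' hX₁' X₂
    intro X₁ X₂
    exact Prod.ext rfl (hmu X₁ X₂)
  · -- first component of P on V×W vanishes
    have hlam : ∀ (X : V) (Y : W), (P (X, 0) ((0 : V), Y)).1 = 0 := by
      have step1 : ∀ (x : Fin n → ℤ) (X : V), X ∈ grV x →
          ∀ Y : W, (P (X, 0) ((0 : V), Y)).1 = 0 := by
        intro x X hX
        refine linear_vanish grW htopW ?_ ?_ ?_
        · show (P (X, 0) ((0 : V), (0 : W))).1 = 0
          rw [show ((0 : V), (0 : W)) = (0 : V × W) from rfl, map_zero]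
          rfl
        · intro u v
          rw [show ((0 : V), (u + v : W)) = ((0 : V), u) + ((0 : V), v) from by
            rw [Prod.mk_add_mk, add_zero], map_add]
          rfl
        · intro y Y hY
          have h := hP ((0 : ℤ), x) ((1 : ℤ), y) _ _ (mem_EgrP_V hX) (mem_EgrP_W hY)
          exact EgrP_fst_eq_zero h (by norm_num [Prod.fst_add])
      intro X Y
      refine linear_vanish grV htopV (f := fun X => (P (X, 0) ((0 : V), Y)).1) ?_ ?_ ?_ X
      · show (P ((0 : V), (0 : W)) ((0 : V), Y)).1 = 0
        rw [show ((0 : V), (0 : W)) = (0 : V × W) from rfl, map_zero]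
        rfl
      · intro u v
        show (P ((u + v : V), (0 : W)) ((0 : V), Y)).1 = _
        rw [show ((u + v : V), (0 : W)) = (u, (0 : W)) + (v, 0) from by
          rw [Prod.mk_add_mk, add_zero], map_add]
        rfl
      · intro x X' hX'
        exact step1 x X' hX' Y
    intro X Y
    exact Prod.ext (hlam X Y) rfl
  · intro x y X Y hX hY
    have h := hP ((1 : ℤ), y) ((0 : ℤ), x) _ _ (mem_EgrP_W hY) (mem_EgrP_V hX)
    refine Prod.ext (EgrP_fst_eq_zero h (by norm_num [Prod.fst_add])) ?_
    show (P ((0 : V), Y) (X, (0 : W))).2 = sgn (pairZ n x y) • brho n P x y X Y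
    rw [brho, sgn_smul_sgn_smul]

end Part4

section Part3
variable {𝕂 : Type} [Field 𝕂] {n : ℕ} {V W : Type}
  [AddCommGroup V] [Module 𝕂 V] [AddCommGroup W] [Module 𝕂 W]
  {grV : (Fin n → ℤ) → Submodule 𝕂 V} {grW : (Fin n → ℤ) → Submodule 𝕂 W}

/-- The element of `M^{(k,(0,c))}(E)` built from `K₀` and the `C p`. -/
def K3b {V W : Type} [AddCommGroup V] [AddCommGroup W] (k : ℕ)
    (K₀ : (ℕ → (Fin n → ℤ)) → (ℕ → V) → V)
    (C : Fin (k + 1) → ((ℕ → (Fin n → ℤ)) → (ℕ → V) → W → W)) :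
    (ℕ → ℤ × (Fin n → ℤ)) → (ℕ → V × W) → V × W :=
  fun x Z => (K₀ (fun i => (x i).2) (fun i => (Z i).1),
    ∑ p : Fin (k + 1),
      C p (fun _ => (0 : Fin n → ℤ)) (delAt (p : ℕ) (fun i => (Z i).1)) ((Z (p : ℕ)).2))

lemma ins1_fst (p : ℕ) (Y : W) (X : ℕ → V) :
    (fun i => ((ins1 p ((0 : V), Y) (fun l => (X l, (0 : W)))) i).1)
      = ins1 p (0 : V) (fun l => X l) := by
  funext i
  simp only [ins1]
  split_ifs <;> rfl

lemma ins1_self {β : Type*} (p : ℕ) (c : β) (f : ℕ → β) : ins1 p c f p = c := by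
  simp [ins1]

lemma ins1_snd_ne (p q : ℕ) (hq : q ≠ p) (Y : W) (X : ℕ → V) :
    ((ins1 p ((0 : V), Y) (fun l => (X l, (0 : W)))) q).2 = 0 := by
  rcases Nat.lt_or_ge q p with h | h
  · simp only [ins1, if_pos h]
  · simp only [ins1, if_neg (show ¬ q < p by omega), if_neg hq]

lemma part3b (k : ℕ) (c : Fin n → ℤ)
    (K₀ : (ℕ → (Fin n → ℤ)) → (ℕ → V) → V)
    (C : Fin (k + 1) → ((ℕ → (Fin n → ℤ)) → (ℕ → V) → W → W))
    (hK0 : MDeg 𝕂 grV (k + 1) c K₀) (hC : ∀ p, LEDeg 𝕂 n grV grW k c (C p)) :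
    ∃ K : (ℕ → ℤ × (Fin n → ℤ)) → (ℕ → V × W) → V × W,
      MDeg 𝕂 (EgrP 𝕂 n grV grW) (k + 1) ((0 : ℤ), c) K ∧
      (∀ (x : ℕ → (Fin n → ℤ)) (X : ℕ → V), (∀ i, X i ∈ grV (x i)) →
        K (fun i => ((0 : ℤ), x i)) (fun i => (X i, (0 : W))) = (K₀ x X, (0 : W))) ∧
      (∀ (p : Fin (k + 1)) (x : ℕ → (Fin n → ℤ)) (X : ℕ → V)
          (y : Fin n → ℤ) (Y : W),
        (∀ i, X i ∈ grV (x i)) → Y ∈ grW y →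
        K (ins1 (p : ℕ) ((1 : ℤ), y) (fun l => ((0 : ℤ), x l)))
          (ins1 (p : ℕ) ((0 : V), Y) (fun l => (X l, (0 : W))))
          = ((0 : V), C p x X Y)) := by
  have hCml : ∀ p, IsML 𝕂 k (C p) := fun p => ⟨(hC p).1, (hC p).2.1, (hC p).2.2.1⟩
  refine ⟨K3b k K₀ C, ⟨⟨?_, ?_, ?_⟩, ?_⟩, ?_, ?_⟩
  · -- independent of degrees
    intro x x' Z
    simp only [K3b]
    rw [hK0.1.1 (fun i => (x i).2) (fun i => (x' i).2)]
  · -- depends on first k+1 arguments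
    intro x Z Z' hag
    simp only [K3b]
    have h1 : K₀ (fun i => (x i).2) (fun i => (Z i).1)
        = K₀ (fun i => (x i).2) (fun i => (Z' i).1) :=
      hK0.1.2.1 _ _ _ (fun i hi => congrArg Prod.fst (hag i hi))
    rw [h1]
    congr 1
    refine Finset.sum_congr rfl (fun p _ => ?_)
    have h2 : C p (fun _ => (0 : Fin n → ℤ)) (delAt (p : ℕ) (fun i => (Z i).1))
        = C p (fun _ => (0 : Fin n → ℤ)) (delAt (p : ℕ) (fun i => (Z' i).1)) := by
      refine (hC p).2.1 _ _ _ (fun l hl => ?_)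
      simp only [delAt]
      split_ifs
      · rw [hag l (by omega)]
      · rw [hag (l + 1) (by omega)]
    rw [h2, hag (p : ℕ) p.isLt]
  · -- multilinear
    intro x Z i hi
    constructor
    · intro u v
      apply Prod.ext
      · simp only [K3b, Prod.fst_add]
        rw [comp_update Prod.fst Z i (u + v), comp_update Prod.fst Z i u,
            comp_update Prod.fst Z i v,
            show (u + v).1 = u.1 + v.1 from rfl,
            (hK0.1.2.2 _ (fun j => (Z j).1) i hi).1 u.1 v.1]
      · simp only [K3b, Prod.snd_add]
        rw [← Finset.sum_add_distrib]
        refine Finset.sum_congr rfl (fun p _ => ?_)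
        rw [comp_update Prod.fst Z i (u + v), comp_update Prod.fst Z i u,
            comp_update Prod.fst Z i v]
        by_cases hpi : (p : ℕ) = i
        · subst hpi
          rw [delAt_update_self, delAt_update_self, delAt_update_self,
              Function.update_self, Function.update_self, Function.update_self]
          exact ((hC p).2.2.2.1 _ _).map_add u.2 v.2
        · have hip : i ≠ (p : ℕ) := fun h => hpi h.symm
          rw [delAt_update (p : ℕ) i hip, delAt_update (p : ℕ) i hip,
              delAt_update (p : ℕ) i hip,
              Function.update_of_ne hpi, Function.update_of_ne hpi,
              Function.update_of_ne hpi]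
          have hi' : (if i < (p : ℕ) then i else i - 1) < k := by
            have := p.isLt
            split_ifs <;> omega
          rw [show (u + v).1 = u.1 + v.1 from rfl,
              congrFun (((hC p).2.2.1 _ (delAt (p : ℕ) (fun j => (Z j).1)) _ hi').1
                u.1 v.1) ((Z (p : ℕ)).2)]
          rfl
    · intro r u
      apply Prod.ext
      · simp only [K3b, Prod.smul_fst]
        rw [comp_update Prod.fst Z i (r • u), comp_update Prod.fst Z i u,
            show (r • u).1 = r • u.1 from rfl,
            (hK0.1.2.2 _ (fun j => (Z j).1) i hi).2 r u.1]
      · simp only [K3b, Prod.smul_snd]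
        rw [Finset.smul_sum]
        refine Finset.sum_congr rfl (fun p _ => ?_)
        rw [comp_update Prod.fst Z i (r • u), comp_update Prod.fst Z i u]
        by_cases hpi : (p : ℕ) = i
        · subst hpi
          rw [delAt_update_self, delAt_update_self,
              Function.update_self, Function.update_self]
          exact ((hC p).2.2.2.1 _ _).map_smul r u.2
        · have hip : i ≠ (p : ℕ) := fun h => hpi h.symm
          rw [delAt_update (p : ℕ) i hip, delAt_update (p : ℕ) i hip,
              Function.update_of_ne hpi, Function.update_of_ne hpi]
          have hi' : (if i < (p : ℕ) then i else i - 1) < k := by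
            have := p.isLt
            split_ifs <;> omega
          rw [show (r • u).1 = r • u.1 from rfl,
              congrFun (((hC p).2.2.1 _ (delAt (p : ℕ) (fun j => (Z j).1)) _ hi').2
                r u.1) ((Z (p : ℕ)).2)]
          rfl
  · -- grading
    intro x Z hZ
    simp only [K3b]
    have F1 : ∀ i, (Z i).1 ∈ grV ((x i).2) := fun i => EgrP_fst_mem (hZ i)
    have F4 : ∀ i, (Z i).2 ∈ grW ((x i).2) := fun i => EgrP_snd_mem (hZ i)
    have hdeg : (∑ i ∈ Finset.range (k + 1), x i) + ((0 : ℤ), c)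
        = ((∑ i ∈ Finset.range (k + 1), (x i).1),
           (∑ i ∈ Finset.range (k + 1), (x i).2) + c) := by
      apply Prod.ext
      · simp [Prod.fst_add, Prod.fst_sum]
      · simp [Prod.snd_add, Prod.snd_sum]
    rw [hdeg]
    have T1 : ∀ p : Fin (k + 1), ∀ q, q < k + 1 → q ≠ (p : ℕ) → (x q).1 ≠ 0 →
        C p (fun _ => (0 : Fin n → ℤ)) (delAt (p : ℕ) (fun i => (Z i).1))
          ((Z (p : ℕ)).2) = 0 := by
      intro p q hq hqp hxq
      have hz : (Z q).1 = 0 := EgrP_fst_eq_zero (hZ q) hxq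
      have hpk := p.isLt
      rcases Nat.lt_or_ge q (p : ℕ) with hlt | hge
      · have hslot : delAt (p : ℕ) (fun i => (Z i).1) q = 0 := by
          simp only [delAt, if_pos hlt]
          exact hz
        have hf := isml_zero_slot (hCml p) (fun _ => (0 : Fin n → ℤ)) _
          (show q < k by omega) hslot
        rw [hf]
        rfl
      · have hgt : (p : ℕ) < q := by omega
        have hslot : delAt (p : ℕ) (fun i => (Z i).1) (q - 1) = 0 := by
          simp only [delAt, if_neg (show ¬ (q - 1 < (p : ℕ)) by omega)]
          rw [show q - 1 + 1 = q by omega]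
          exact hz
        have hf := isml_zero_slot (hCml p) (fun _ => (0 : Fin n → ℤ)) _
          (show q - 1 < k by omega) hslot
        rw [hf]
        rfl
    have T2 : ∀ p : Fin (k + 1), (x (p : ℕ)).1 ≠ 1 →
        C p (fun _ => (0 : Fin n → ℤ)) (delAt (p : ℕ) (fun i => (Z i).1))
          ((Z (p : ℕ)).2) = 0 := by
      intro p hp1
      rw [EgrP_snd_eq_zero (hZ _) hp1]
      exact ((hC p).2.2.2.1 _ _).map_zero
    have CL : (∑ i ∈ Finset.range (k + 1), (x i).1) ≠ 1 → ∀ p : Fin (k + 1),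
        C p (fun _ => (0 : Fin n → ℤ)) (delAt (p : ℕ) (fun i => (Z i).1))
          ((Z (p : ℕ)).2) = 0 := by
      intro hs1 p
      by_cases hsp : ∑ q ∈ (Finset.range (k + 1)).erase (p : ℕ), (x q).1 = 0
      · have hxp : (x (p : ℕ)).1 = ∑ i ∈ Finset.range (k + 1), (x i).1 := by
          rw [← Finset.sum_erase_add _ _ (Finset.mem_range.mpr p.isLt), hsp, zero_add]
        exact T2 p (by omega)
      · obtain ⟨q, hq, hne⟩ := Finset.exists_ne_zero_of_sum_ne_zero hsp
        rw [Finset.mem_erase] at hq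
        exact T1 p q (Finset.mem_range.mp hq.2) hq.1 hne
    have Kfst0 : (∑ i ∈ Finset.range (k + 1), (x i).1) ≠ 0 →
        K₀ (fun i => (x i).2) (fun i => (Z i).1) = 0 := by
      intro hs0
      obtain ⟨q, hq, hne⟩ := Finset.exists_ne_zero_of_sum_ne_zero hs0
      exact isml_zero_slot hK0.1 _ _ (Finset.mem_range.mp hq)
        (EgrP_fst_eq_zero (hZ q) hne)
    by_cases hs0 : (∑ i ∈ Finset.range (k + 1), (x i).1) = 0
    · rw [hs0, EgrP_zero]
      refine Submodule.mem_prod.mpr ⟨?_, ?_⟩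
      · exact hK0.2 (fun i => (x i).2) (fun i => (Z i).1) F1
      · show (∑ p : Fin (k + 1), _) ∈ _
        rw [Finset.sum_eq_zero (fun p _ => CL (by omega) p)]
        exact Submodule.zero_mem _
    · by_cases hs1 : (∑ i ∈ Finset.range (k + 1), (x i).1) = 1
      · rw [hs1, EgrP_one]
        have hB : ∀ p ∈ (Finset.univ : Finset (Fin (k + 1))),
            C p (fun _ => (0 : Fin n → ℤ)) (delAt (p : ℕ) (fun i => (Z i).1))
              ((Z (p : ℕ)).2) ∈ grW ((∑ i ∈ Finset.range (k + 1), (x i).2) + c) := by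
          intro p _
          by_cases hxp : (x (p : ℕ)).1 = 1
          · have harg : ∀ l, delAt (p : ℕ) (fun i => (Z i).1) l
                ∈ grV (delAt (p : ℕ) (fun i => (x i).2) l) := by
              intro l
              simp only [delAt]
              split_ifs
              · exact F1 l
              · exact F1 (l + 1)
            have hmem := (hC p).2.2.2.2 (delAt (p : ℕ) (fun i => (x i).2))
              (delAt (p : ℕ) (fun i => (Z i).1)) harg ((x (p : ℕ)).2) ((Z (p : ℕ)).2) (F4 _)
            rw [(hC p).1 (fun _ => (0 : Fin n → ℤ)) (delAt (p : ℕ) (fun i => (x i).2))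
              (delAt (p : ℕ) (fun i => (Z i).1))]
            have hsum : (∑ l ∈ Finset.range k, delAt (p : ℕ) (fun i => (x i).2) l) + c
                + (x (p : ℕ)).2 = (∑ i ∈ Finset.range (k + 1), (x i).2) + c := by
              rw [← sum_delAt k (p : ℕ) (Nat.lt_succ_iff.mp p.isLt) (fun i => (x i).2)]
              abel
            rw [← hsum]
            exact hmem
          · rw [T2 p hxp]
            exact Submodule.zero_mem _
        exact Submodule.mem_prod.mpr ⟨(Submodule.mem_bot _).mpr (Kfst0 hs0),
          Submodule.sum_mem _ hB⟩
      · rw [EgrP_other hs0 hs1]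
        refine (Submodule.mem_bot _).mpr (Prod.ext (Kfst0 hs0) ?_)
        show (∑ p : Fin (k + 1), C p (fun _ => (0 : Fin n → ℤ))
            (delAt (p : ℕ) (fun i => (Z i).1)) ((Z (p : ℕ)).2)) = (0 : W)
        exact Finset.sum_eq_zero (fun p _ => CL hs1 p)
  · -- compatibility on V arguments
    intro x X hX
    refine Prod.ext rfl ?_
    show (∑ p : Fin (k + 1), _) = (0 : W)
    exact Finset.sum_eq_zero (fun p _ => ((hC p).2.2.2.1 _ _).map_zero)
  · -- compatibility with W slot
    intro p x X y Y hX hY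
    simp only [K3b]
    refine Prod.ext ?_ ?_
    · show K₀ _ (fun i => ((ins1 (p : ℕ) ((0 : V), Y) (fun l => (X l, (0 : W)))) i).1) = _
      rw [ins1_fst]
      exact isml_zero_slot hK0.1 _ _ p.isLt (ins1_self (p : ℕ) (0 : V) _)
    · show (∑ q : Fin (k + 1), _) = _
      rw [Finset.sum_eq_single_of_mem p (Finset.mem_univ p) (fun q _ hqp => ?_)]
      · rw [ins1_fst, delAt_ins1, ins1_self]
        exact congrFun ((hC p).1 (fun _ => (0 : Fin n → ℤ)) x (fun l => X l)) Y
      · rw [ins1_snd_ne (p : ℕ) (q : ℕ) (fun h => hqp (Fin.ext h)) Y X]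
        exact ((hC q).2.2.2.1 _ _).map_zero

lemma ins1_arg_mem {grV : (Fin n → ℤ) → Submodule 𝕂 V} {grW : (Fin n → ℤ) → Submodule 𝕂 W}
    (p : ℕ) (x : ℕ → (Fin n → ℤ)) (X : ℕ → V) (y : Fin n → ℤ) (Y : W)
    (hX : ∀ i, X i ∈ grV (x i)) (hY : Y ∈ grW y) :
    ∀ i, (ins1 p ((0 : V), Y) (fun l => (X l, (0 : W)))) i
      ∈ EgrP 𝕂 n grV grW ((ins1 p ((1 : ℤ), y) (fun l => ((0 : ℤ), x l))) i) := by
  intro i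
  simp only [ins1]
  split_ifs
  · exact mem_EgrP_V (hX i)
  · exact mem_EgrP_W hY
  · exact mem_EgrP_V (hX (i - 1))

lemma ins1_deg_sum (k p : ℕ) (hp : p ≤ k) (y c : Fin n → ℤ) (x : ℕ → (Fin n → ℤ)) :
    (∑ i ∈ Finset.range (k + 1), (ins1 p ((1 : ℤ), y) (fun l => ((0 : ℤ), x l))) i)
        + ((0 : ℤ), c)
      = ((1 : ℤ), (∑ i ∈ Finset.range k, x i) + c + y) := by
  rw [sum_ins1 k p hp]
  apply Prod.ext
  · simp [Prod.fst_add, Prod.fst_sum]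
  · simp only [Prod.snd_add, Prod.snd_sum]
    abel

lemma part3a (htopV : iSup grV = ⊤) (htopW : iSup grW = ⊤) (k : ℕ) (c : Fin n → ℤ)
    (K : (ℕ → ℤ × (Fin n → ℤ)) → (ℕ → V × W) → V × W)
    (hK : MDeg 𝕂 (EgrP 𝕂 n grV grW) (k + 1) ((0 : ℤ), c) K) :
    ∃! KC : ((ℕ → (Fin n → ℤ)) → (ℕ → V) → V)
        × (Fin (k + 1) → ((ℕ → (Fin n → ℤ)) → (ℕ → V) → W → W)),
      (MDeg 𝕂 grV (k + 1) c KC.1 ∧ ∀ p, LEDeg 𝕂 n grV grW k c (KC.2 p)) ∧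
      (∀ (x : ℕ → (Fin n → ℤ)) (X : ℕ → V), (∀ i, X i ∈ grV (x i)) →
        K (fun i => ((0 : ℤ), x i)) (fun i => (X i, (0 : W)))
          = (KC.1 x X, (0 : W))) ∧
      (∀ (p : Fin (k + 1)) (x : ℕ → (Fin n → ℤ)) (X : ℕ → V)
          (y : Fin n → ℤ) (Y : W),
        (∀ i, X i ∈ grV (x i)) → Y ∈ grW y →
        K (ins1 (p : ℕ) ((1 : ℤ), y) (fun l => ((0 : ℤ), x l)))
          (ins1 (p : ℕ) ((0 : V), Y) (fun l => (X l, (0 : W))))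
          = ((0 : V), KC.2 p x X Y)) := by
  set K1 : (ℕ → (Fin n → ℤ)) → (ℕ → V) → V :=
    fun x X => (K (fun i => ((0 : ℤ), x i)) (fun i => (X i, (0 : W)))).1 with hK1def
  set K2 : Fin (k + 1) → ((ℕ → (Fin n → ℤ)) → (ℕ → V) → W → W) :=
    fun p _ X Y => (K (fun _ => ((0 : ℤ), (0 : Fin n → ℤ)))
      (ins1 (p : ℕ) ((0 : V), Y) (fun l => (X l, (0 : W))))).2 with hK2def
  have hgrad1 : ∀ (x : ℕ → (Fin n → ℤ)) (X : ℕ → V), (∀ i, X i ∈ grV (x i)) →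
      K (fun i => ((0 : ℤ), x i)) (fun i => (X i, (0 : W)))
        ∈ EgrP 𝕂 n grV grW ((0 : ℤ), (∑ i ∈ Finset.range (k + 1), x i) + c) := by
    intro x X hX
    have h := hK.2 (fun i => ((0 : ℤ), x i)) (fun i => (X i, 0))
      (fun i => mem_EgrP_V (hX i))
    rwa [degV_sum k c x 0] at h
  have hcompat1 : ∀ (x : ℕ → (Fin n → ℤ)) (X : ℕ → V), (∀ i, X i ∈ grV (x i)) →
      K (fun i => ((0 : ℤ), x i)) (fun i => (X i, (0 : W))) = (K1 x X, (0 : W)) := by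
    intro x X hX
    exact Prod.ext rfl (EgrP_snd_eq_zero (hgrad1 x X hX) (by norm_num))
  have hgrad2 : ∀ (p : Fin (k + 1)) (x : ℕ → (Fin n → ℤ)) (X : ℕ → V)
      (y : Fin n → ℤ) (Y : W), (∀ i, X i ∈ grV (x i)) → Y ∈ grW y →
      K (ins1 (p : ℕ) ((1 : ℤ), y) (fun l => ((0 : ℤ), x l)))
        (ins1 (p : ℕ) ((0 : V), Y) (fun l => (X l, (0 : W))))
        ∈ EgrP 𝕂 n grV grW ((1 : ℤ), (∑ i ∈ Finset.range k, x i) + c + y) := by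
    intro p x X y Y hX hY
    have h := hK.2 _ _ (ins1_arg_mem (p : ℕ) x X y Y hX hY)
    rwa [ins1_deg_sum k (p : ℕ) (Nat.lt_succ_iff.mp p.isLt) y c x] at h
  have hcompat2 : ∀ (p : Fin (k + 1)) (x : ℕ → (Fin n → ℤ)) (X : ℕ → V)
      (y : Fin n → ℤ) (Y : W), (∀ i, X i ∈ grV (x i)) → Y ∈ grW y →
      K (ins1 (p : ℕ) ((1 : ℤ), y) (fun l => ((0 : ℤ), x l)))
        (ins1 (p : ℕ) ((0 : V), Y) (fun l => (X l, (0 : W))))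
        = ((0 : V), K2 p x X Y) := by
    intro p x X y Y hX hY
    refine Prod.ext (EgrP_fst_eq_zero (hgrad2 p x X y Y hX hY) (by norm_num)) ?_
    simp only [hK2def]
    rw [hK.1.1 (ins1 (p : ℕ) ((1 : ℤ), y) (fun l => ((0 : ℤ), x l)))
      (fun _ => ((0 : ℤ), (0 : Fin n → ℤ)))]
  have hisml1 : IsML 𝕂 (k + 1) K1 := by
    refine ⟨?_, ?_, ?_⟩
    · intro x x' X
      simp only [hK1def]
      rw [hK.1.1 (fun i => ((0 : ℤ), x i)) (fun i => ((0 : ℤ), x' i))]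
    · intro x X X' h
      simp only [hK1def]
      rw [hK.1.2.1 _ (fun i => (X i, 0)) (fun i => (X' i, 0))
        (fun i hi => congrArg (fun v => ((v : V), (0 : W))) (h i hi))]
    · intro x X i hi
      constructor
      · intro u v
        simp only [hK1def]
        rw [comp_update (fun v : V => (v, (0 : W))) X i (u + v),
            comp_update (fun v : V => (v, (0 : W))) X i u,
            comp_update (fun v : V => (v, (0 : W))) X i v]
        have he : ((u + v : V), (0 : W)) = (u, (0 : W)) + (v, 0) := by
          simp [Prod.mk_add_mk]
        rw [he, (hK.1.2.2 _ (fun j => (X j, 0)) i hi).1 (u, 0) (v, 0)]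
        rfl
      · intro r u
        simp only [hK1def]
        rw [comp_update (fun v : V => (v, (0 : W))) X i (r • u),
            comp_update (fun v : V => (v, (0 : W))) X i u]
        have he : ((r • u : V), (0 : W)) = r • ((u : V), (0 : W)) := by
          simp [Prod.smul_mk]
        rw [he, (hK.1.2.2 _ (fun j => (X j, 0)) i hi).2 r (u, 0)]
        rfl
  have hMDeg1 : MDeg 𝕂 grV (k + 1) c K1 :=
    ⟨hisml1, fun x X hX => EgrP_fst_mem (hgrad1 x X hX)⟩
  have hLE : ∀ p, LEDeg 𝕂 n grV grW k c (K2 p) := by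
    intro p
    have hpk : (p : ℕ) ≤ k := Nat.lt_succ_iff.mp p.isLt
    have hupd : ∀ (X : ℕ → V) (Z : V × W),
        Function.update (ins1 (p : ℕ) ((0 : V), (0 : W)) (fun l => (X l, (0 : W))))
          (p : ℕ) Z = ins1 (p : ℕ) Z (fun l => (X l, (0 : W))) :=
      fun X Z => update_ins1 (p : ℕ) ((0 : V), (0 : W)) Z (fun l => (X l, (0 : W)))
    refine ⟨fun x x' X => rfl, ?_, ?_, ?_, ?_⟩
    · intro x X X' h
      funext Y
      simp only [hK2def]
      rw [hK.1.2.1 _ (ins1 (p : ℕ) ((0 : V), Y) (fun l => (X l, (0 : W))))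
        (ins1 (p : ℕ) ((0 : V), Y) (fun l => (X' l, (0 : W)))) ?_]
      intro i hi
      simp only [ins1]
      split_ifs with h1 h2
      · rw [h i (by omega)]
      · rfl
      · rw [h (i - 1) (by omega)]
    · intro x X i hi
      have hi' : (if i < (p : ℕ) then i else i + 1) < k + 1 := by
        split_ifs <;> omega
      have hl : ∀ (Y : W) (w : V), ins1 (p : ℕ) ((0 : V), Y)
          (fun l => ((Function.update X i w) l, (0 : W)))
          = Function.update (ins1 (p : ℕ) ((0 : V), Y) (fun l => (X l, (0 : W))))
            (if i < (p : ℕ) then i else i + 1) ((w : V), (0 : W)) := by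
        intro Y w
        rw [comp_update (fun v : V => (v, (0 : W))) X i w,
          ins1_update (p : ℕ) i ((0 : V), Y) ((w : V), (0 : W)) (fun l => (X l, (0 : W)))]
      constructor
      · intro u v
        funext Y
        simp only [hK2def, Pi.add_apply]
        rw [hl Y (u + v), hl Y u, hl Y v]
        have he : ((u + v : V), (0 : W)) = (u, (0 : W)) + (v, 0) := by
          simp [Prod.mk_add_mk]
        rw [he, (hK.1.2.2 _ _ _ hi').1 (u, 0) (v, 0)]
        rfl
      · intro r u
        funext Y
        simp only [hK2def, Pi.smul_apply]
        rw [hl Y (r • u), hl Y u]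
        have he : ((r • u : V), (0 : W)) = r • ((u : V), (0 : W)) := by
          simp [Prod.smul_mk]
        rw [he, (hK.1.2.2 _ _ _ hi').2 r (u, 0)]
        rfl
    · intro x X
      constructor
      · intro Y Y'
        simp only [hK2def]
        rw [show (((0 : V), Y + Y') : V × W) = ((0 : V), Y) + ((0 : V), Y') from by
            rw [Prod.mk_add_mk, add_zero],
          ← hupd X (((0 : V), Y) + ((0 : V), Y')),
          (hK.1.2.2 _ _ (p : ℕ) p.isLt).1 ((0 : V), Y) ((0 : V), Y'),
          hupd X ((0 : V), Y), hupd X ((0 : V), Y')]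
        rfl
      · intro r Y
        simp only [hK2def]
        rw [show (((0 : V), r • Y) : V × W) = r • ((0 : V), Y) from by
            rw [Prod.smul_mk, smul_zero],
          ← hupd X (r • ((0 : V), Y)),
          (hK.1.2.2 _ _ (p : ℕ) p.isLt).2 r ((0 : V), Y),
          hupd X ((0 : V), Y)]
        rfl
    · intro x X hX y Y hY
      have h := EgrP_snd_mem (hgrad2 p x X y Y hX hY)
      simp only [hK2def]
      rw [hK.1.1 (fun _ => ((0 : ℤ), (0 : Fin n → ℤ)))
        (ins1 (p : ℕ) ((1 : ℤ), y) (fun l => ((0 : ℤ), x l)))]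
      exact h
  refine ⟨(K1, K2), ⟨⟨hMDeg1, hLE⟩, hcompat1, hcompat2⟩, ?_⟩
  rintro ⟨K1', K2'⟩ ⟨⟨hM1', hLE'⟩, hcomp1', hcomp2'⟩
  have e1 : K1' = K1 := by
    have hagree : ∀ x X, (∀ i, X i ∈ grV (x i)) → K1' x X = K1 x X := by
      intro x X hX
      have h2 := hcompat1 x X hX
      rw [hcomp1' x X hX] at h2
      exact (Prod.mk.injEq _ _ _ _ ▸ h2).1
    funext x X
    exact ml_agree grV htopV (k + 1) K1' K1 hM1'.1 hisml1 hagree x X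
  have e2 : K2' = K2 := by
    funext p
    have s1 : ∀ x X, (∀ i, X i ∈ grV (x i)) → ∀ y Y, Y ∈ grW y →
        K2' p x X Y = K2 p x X Y := by
      intro x X hX y Y hY
      have h2 := hcompat2 p x X y Y hX hY
      rw [hcomp2' p x X y Y hX hY] at h2
      exact (Prod.mk.injEq _ _ _ _ ▸ h2).2
    have s2 : ∀ x X, (∀ i, X i ∈ grV (x i)) → K2' p x X = K2 p x X := by
      intro x X hX
      funext Y
      have hlin' : IsLinearMap 𝕂 (K2' p x X) := (hLE' p).2.2.2.1 x X
      have hlin : IsLinearMap 𝕂 (K2 p x X) := (hLE p).2.2.2.1 x X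
      have hv := linear_vanish grW htopW
        (f := fun Y => K2' p x X Y - K2 p x X Y)
        (by show K2' p x X 0 - K2 p x X 0 = 0
            rw [hlin'.map_zero, hlin.map_zero, sub_zero])
        (fun u v => by
          show K2' p x X (u + v) - K2 p x X (u + v)
            = (K2' p x X u - K2 p x X u) + (K2' p x X v - K2 p x X v)
          rw [hlin'.map_add, hlin.map_add]
          abel)
        (fun y Y hY => by
          show K2' p x X Y - K2 p x X Y = 0
          rw [s1 x X hX y Y hY, sub_self]) Y
      exact sub_eq_zero.mp hv
    funext x X
    exact ml_agree grV htopV k (K2' p) (K2 p)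
      ⟨(hLE' p).1, (hLE' p).2.1, (hLE' p).2.2.1⟩
      ⟨(hLE p).1, (hLE p).2.1, (hLE p).2.2.1⟩ s2 x X
  exact Prod.ext e1 e2

end Part3

/-- Decomposition of the homogeneous components of `M(E)` for
`E = V ⊕ W` (`E^{(0,*)} = V`, `E^{(1,*)} = W`): for form degree `k` (arity `k+1`) and
weight `(q,c)`;  `M^{(k,q,*)}(E) = 0` for `q > 1`;  `M^{(k,1,c)}(E) ≅ L^{(k+1,c)}(V,W)`;
`M^{(k,0,c)}(E) ≅ M^{(k,c)}(V) ⊕ ⊕^{k+1} L^{(k,c)}(V,End(W))` — each isomorphism being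
expressed by a unique correspondence on homogeneous arguments — and a bilinear
`P ∈ M^{(1,(0,0))}(E)` corresponds exactly to the triple `μ + λ + ρ`. -/
theorem stmt13 {𝕂 : Type} [Field 𝕂] [CharZero 𝕂] (n : ℕ)
    {V W : Type} [AddCommGroup V] [Module 𝕂 V] [AddCommGroup W] [Module 𝕂 W]
    (grV : (Fin n → ℤ) → Submodule 𝕂 V) (hgrV : DirectSum.IsInternal grV)
    (grW : (Fin n → ℤ) → Submodule 𝕂 W) (hgrW : DirectSum.IsInternal grW)
    (k : ℕ) (c : Fin n → ℤ) :
    -- `M^{(k,q,*)}(E) = 0` for `q > 1`: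
    (∀ q : ℤ, 1 < q →
      ∀ K : (ℕ → ℤ × (Fin n → ℤ)) → (ℕ → V × W) → V × W,
        MDeg 𝕂 (EgrP 𝕂 n grV grW) (k + 1) (q, c) K →
        ∀ x X, (∀ i, X i ∈ EgrP 𝕂 n grV grW (x i)) → K x X = 0) ∧
    -- `M^{(k,1,c)}(E) ≅ L^{(k+1,c)}(V,W)`:
    ((∀ K : (ℕ → ℤ × (Fin n → ℤ)) → (ℕ → V × W) → V × W,
        MDeg 𝕂 (EgrP 𝕂 n grV grW) (k + 1) ((1 : ℤ), c) K →
        ∃! C : (ℕ → (Fin n → ℤ)) → (ℕ → V) → W,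
          LDeg 𝕂 n grV grW (k + 1) c C ∧
          ∀ (x : ℕ → (Fin n → ℤ)) (X : ℕ → V), (∀ i, X i ∈ grV (x i)) →
            K (fun i => ((0 : ℤ), x i)) (fun i => (X i, (0 : W))) = ((0 : V), C x X)) ∧
     (∀ C : (ℕ → (Fin n → ℤ)) → (ℕ → V) → W, LDeg 𝕂 n grV grW (k + 1) c C →
        ∃ K : (ℕ → ℤ × (Fin n → ℤ)) → (ℕ → V × W) → V × W,
          MDeg 𝕂 (EgrP 𝕂 n grV grW) (k + 1) ((1 : ℤ), c) K ∧
          ∀ (x : ℕ → (Fin n → ℤ)) (X : ℕ → V), (∀ i, X i ∈ grV (x i)) →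
            K (fun i => ((0 : ℤ), x i)) (fun i => (X i, (0 : W))) = ((0 : V), C x X))) ∧
    -- `M^{(k,0,c)}(E) ≅ M^{(k,c)}(V) ⊕ ⊕^{k+1} L^{(k,c)}(V, End W)`:
    ((∀ K : (ℕ → ℤ × (Fin n → ℤ)) → (ℕ → V × W) → V × W,
        MDeg 𝕂 (EgrP 𝕂 n grV grW) (k + 1) ((0 : ℤ), c) K →
        ∃! KC : ((ℕ → (Fin n → ℤ)) → (ℕ → V) → V)
            × (Fin (k + 1) → ((ℕ → (Fin n → ℤ)) → (ℕ → V) → W → W)),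
          (MDeg 𝕂 grV (k + 1) c KC.1 ∧ ∀ p, LEDeg 𝕂 n grV grW k c (KC.2 p)) ∧
          (∀ (x : ℕ → (Fin n → ℤ)) (X : ℕ → V), (∀ i, X i ∈ grV (x i)) →
            K (fun i => ((0 : ℤ), x i)) (fun i => (X i, (0 : W)))
              = (KC.1 x X, (0 : W))) ∧
          (∀ (p : Fin (k + 1)) (x : ℕ → (Fin n → ℤ)) (X : ℕ → V)
              (y : Fin n → ℤ) (Y : W),
            (∀ i, X i ∈ grV (x i)) → Y ∈ grW y →
            K (ins1 (p : ℕ) ((1 : ℤ), y) (fun l => ((0 : ℤ), x l)))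
              (ins1 (p : ℕ) ((0 : V), Y) (fun l => (X l, (0 : W))))
              = ((0 : V), KC.2 p x X Y))) ∧
     (∀ (K₀ : (ℕ → (Fin n → ℤ)) → (ℕ → V) → V)
        (C : Fin (k + 1) → ((ℕ → (Fin n → ℤ)) → (ℕ → V) → W → W)),
        MDeg 𝕂 grV (k + 1) c K₀ → (∀ p, LEDeg 𝕂 n grV grW k c (C p)) →
        ∃ K : (ℕ → ℤ × (Fin n → ℤ)) → (ℕ → V × W) → V × W,
          MDeg 𝕂 (EgrP 𝕂 n grV grW) (k + 1) ((0 : ℤ), c) K ∧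
          (∀ (x : ℕ → (Fin n → ℤ)) (X : ℕ → V), (∀ i, X i ∈ grV (x i)) →
            K (fun i => ((0 : ℤ), x i)) (fun i => (X i, (0 : W))) = (K₀ x X, (0 : W))) ∧
          (∀ (p : Fin (k + 1)) (x : ℕ → (Fin n → ℤ)) (X : ℕ → V)
              (y : Fin n → ℤ) (Y : W),
            (∀ i, X i ∈ grV (x i)) → Y ∈ grW y →
            K (ins1 (p : ℕ) ((1 : ℤ), y) (fun l => ((0 : ℤ), x l)))
              (ins1 (p : ℕ) ((0 : V), Y) (fun l => (X l, (0 : W))))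
              = ((0 : V), C p x X Y)))) ∧
    -- a bilinear `P` of weight `(0,0)` corresponds exactly to `μ + λ + ρ`:
    (∀ P : (V × W) →ₗ[𝕂] (V × W) →ₗ[𝕂] (V × W),
      (∀ (g h : ℤ × (Fin n → ℤ)) (u v : V × W),
          u ∈ EgrP 𝕂 n grV grW g → v ∈ EgrP 𝕂 n grV grW h →
          P u v ∈ EgrP 𝕂 n grV grW (g + h)) →
      (∀ X₁ X₂ : V, P (X₁, 0) (X₂, 0) = (bmu P X₁ X₂, (0 : W))) ∧
      (∀ (X : V) (Y : W), P (X, 0) ((0 : V), Y) = ((0 : V), blam P X Y)) ∧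
      (∀ (x y : Fin n → ℤ) (X : V) (Y : W), X ∈ grV x → Y ∈ grW y →
        P ((0 : V), Y) (X, (0 : W))
          = ((0 : V), sgn (pairZ n x y) • brho n P x y X Y))) := by
  classical
  have htopV : iSup grV = ⊤ := hgrV.submodule_iSup_eq_top
  have htopW : iSup grW = ⊤ := hgrW.submodule_iSup_eq_top
  refine ⟨?_, ⟨?_, ?_⟩, ⟨?_, ?_⟩, ?_⟩
  · intro q hq K hK x X hX
    exact part1 k c q hq K hK x X hX
  · intro K hK
    exact part2a htopV k c K hK
  · intro C hC
    exact part2b k c C hC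
  · intro K hK
    exact part3a htopV htopW k c K hK
  · intro K₀ C hK0 hC
    exact part3b k c K₀ C hK0 hC
  · intro P hP
    exact part4 htopV htopW P hP

end NR
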